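/- Let K : ℝ² → ℝ be continuously differentiable and let u : ℝ² × ℝ² × ℝ → ℝ, written u(x₁,x₂,y₁,y₂,t), be twice continuously differentiable. Suppose that at every point, ∂ₜu = ∂_{y₁}(K(y)∂_{y₁}u) + ∂_{y₂}(K(y)∂_{y₂}u) + (∂_{y₁}K)(y)·∂_{x₁}u + 2K(y)∂_{y₁}∂_{x₁}u + (∂_{y₂}K)(y)·∂_{x₂}u + 2K(y)∂_{y₂}∂_{x₂}u + K(y)(∂_{x₁}²u + ∂_{x₂}²u), where y = (y₁,y₂). Then for every φ ∈ ℝ², the function ů(x,t) := u(x₁,x₂, x₁+φ₁, x₂+φ₂, t) satisfies, at every point, ∂ₜů = ∂_{x₁}(K(x+φ)∂_{x₁}ů) + ∂_{x₂}(K(x+φ)∂_{x₂}ů). -/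

import Mathlib

/-- partial derivative of a five-argument function in its 1st argument (`x₁`). -/
noncomputable def px1 (f : ℝ → ℝ → ℝ → ℝ → ℝ → ℝ) : ℝ → ℝ → ℝ → ℝ → ℝ → ℝ :=
  fun x₁ x₂ y₁ y₂ t => deriv (fun s => f s x₂ y₁ y₂ t) x₁

/-- partial derivative in the 2nd argument (`x₂`). -/
noncomputable def px2 (f : ℝ → ℝ → ℝ → ℝ → ℝ → ℝ) : ℝ → ℝ → ℝ → ℝ → ℝ → ℝ :=
  fun x₁ x₂ y₁ y₂ t => deriv (fun s => f x₁ s y₁ y₂ t) x₂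

/-- partial derivative in the 3rd argument (`y₁`). -/
noncomputable def py1 (f : ℝ → ℝ → ℝ → ℝ → ℝ → ℝ) : ℝ → ℝ → ℝ → ℝ → ℝ → ℝ :=
  fun x₁ x₂ y₁ y₂ t => deriv (fun s => f x₁ x₂ s y₂ t) y₁

/-- partial derivative in the 4th argument (`y₂`). -/
noncomputable def py2 (f : ℝ → ℝ → ℝ → ℝ → ℝ → ℝ) : ℝ → ℝ → ℝ → ℝ → ℝ → ℝ :=
  fun x₁ x₂ y₁ y₂ t => deriv (fun s => f x₁ x₂ y₁ s t) y₂

/-- partial derivative in the 5th argument (`t`). -/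
noncomputable def pt5 (f : ℝ → ℝ → ℝ → ℝ → ℝ → ℝ) : ℝ → ℝ → ℝ → ℝ → ℝ → ℝ :=
  fun x₁ x₂ y₁ y₂ t => deriv (fun s => f x₁ x₂ y₁ y₂ s) t

/-- If `u(x₁,x₂,y₁,y₂,t)` satisfies the embedding PDE
`∂ₜu = ∂_{y₁}(K ∂_{y₁}u) + ∂_{y₂}(K ∂_{y₂}u) + K_{y₁}∂_{x₁}u + 2K ∂_{y₁}∂_{x₁}u
      + K_{y₂}∂_{x₂}u + 2K ∂_{y₂}∂_{x₂}u + K(∂_{x₁}²u + ∂_{x₂}²u)`,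
then for every phase shift `φ` the diagonal restriction `ů(x,t) = u(x, x+φ, t)` satisfies
the heterogeneous diffusion PDE `∂ₜů = ∇·(K(x+φ)∇ů)`. -/
theorem embedding_diagonal_solves_heterogeneous_diffusion
    (K : ℝ × ℝ → ℝ) (hK : ContDiff ℝ 1 K)
    (u : ℝ → ℝ → ℝ → ℝ → ℝ → ℝ)
    (hu : ContDiff ℝ 2 (fun q : ℝ × ℝ × ℝ × ℝ × ℝ =>
      u q.1 q.2.1 q.2.2.1 q.2.2.2.1 q.2.2.2.2))
    (hpde : ∀ x₁ x₂ y₁ y₂ t : ℝ,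
      pt5 u x₁ x₂ y₁ y₂ t =
        deriv (fun s => K (s, y₂) * py1 u x₁ x₂ s y₂ t) y₁
        + deriv (fun s => K (y₁, s) * py2 u x₁ x₂ y₁ s t) y₂
        + deriv (fun s => K (s, y₂)) y₁ * px1 u x₁ x₂ y₁ y₂ t
        + 2 * K (y₁, y₂) * py1 (px1 u) x₁ x₂ y₁ y₂ t
        + deriv (fun s => K (y₁, s)) y₂ * px2 u x₁ x₂ y₁ y₂ t
        + 2 * K (y₁, y₂) * py2 (px2 u) x₁ x₂ y₁ y₂ t
        + K (y₁, y₂) * (px1 (px1 u) x₁ x₂ y₁ y₂ t + px2 (px2 u) x₁ x₂ y₁ y₂ t)) :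
    ∀ φ₁ φ₂ : ℝ,
      ∀ x₁ x₂ t : ℝ,
        deriv (fun s => u x₁ x₂ (x₁ + φ₁) (x₂ + φ₂) s) t =
          deriv (fun s => K (s + φ₁, x₂ + φ₂)
              * deriv (fun w => u w x₂ (w + φ₁) (x₂ + φ₂) t) s) x₁
          + deriv (fun s => K (x₁ + φ₁, s + φ₂)
              * deriv (fun w => u x₁ w (x₁ + φ₁) (w + φ₂) t) s) x₂ := by
  intro φ₁ φ₂ x₁ x₂ t
  -- The uncurried function and its derivatives
  set F : ℝ × ℝ × ℝ × ℝ × ℝ → ℝ :=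
    fun q => u q.1 q.2.1 q.2.2.1 q.2.2.2.1 q.2.2.2.2 with hFdef
  have hFdiff : Differentiable ℝ F := hu.differentiable (by norm_num)
  set f' : (ℝ × ℝ × ℝ × ℝ × ℝ) → (ℝ × ℝ × ℝ × ℝ × ℝ) →L[ℝ] ℝ := fderiv ℝ F with hf'def
  have hf'c : ContDiff ℝ 1 f' := hu.fderiv_right (by norm_num)
  have hf'diff : Differentiable ℝ f' := hf'c.differentiable one_ne_zero
  have hKdiff : Differentiable ℝ K := hK.differentiable one_ne_zero
  -- basis vectors
  set e1 : ℝ × ℝ × ℝ × ℝ × ℝ := (1, 0, 0, 0, 0) with he1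
  set e2 : ℝ × ℝ × ℝ × ℝ × ℝ := (0, 1, 0, 0, 0) with he2
  set e3 : ℝ × ℝ × ℝ × ℝ × ℝ := (0, 0, 1, 0, 0) with he3
  set e4 : ℝ × ℝ × ℝ × ℝ × ℝ := (0, 0, 0, 1, 0) with he4
  -- generic chain rules
  have key : ∀ (γ : ℝ → ℝ × ℝ × ℝ × ℝ × ℝ) (v : ℝ × ℝ × ℝ × ℝ × ℝ) (s : ℝ),
      HasDerivAt γ v s → HasDerivAt (fun w => F (γ w)) (f' (γ s) v) s := by
    intro γ v s hγ
    exact (hFdiff (γ s)).hasFDerivAt.comp_hasDerivAt s hγ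
  have key2 : ∀ (γ : ℝ → ℝ × ℝ × ℝ × ℝ × ℝ) (v e : ℝ × ℝ × ℝ × ℝ × ℝ) (s : ℝ),
      HasDerivAt γ v s →
      HasDerivAt (fun w => f' (γ w) e) ((fderiv ℝ f' (γ s) v) e) s := by
    intro γ v e s hγ
    have h1 : HasDerivAt (fun w => f' (γ w)) (fderiv ℝ f' (γ s) v) s :=
      (hf'diff (γ s)).hasFDerivAt.comp_hasDerivAt s hγ
    simpa using h1.clm_apply (hasDerivAt_const s e)
  -- curves
  have curve1 : ∀ (a b c d e : ℝ),
      HasDerivAt (fun s => ((s, b, c, d, e) : ℝ × ℝ × ℝ × ℝ × ℝ)) e1 a :=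
    fun a b c d e => (hasDerivAt_id a).prodMk ((hasDerivAt_const a b).prodMk
      ((hasDerivAt_const a c).prodMk ((hasDerivAt_const a d).prodMk (hasDerivAt_const a e))))
  have curve2 : ∀ (a b c d e : ℝ),
      HasDerivAt (fun s => ((a, s, c, d, e) : ℝ × ℝ × ℝ × ℝ × ℝ)) e2 b :=
    fun a b c d e => (hasDerivAt_const b a).prodMk ((hasDerivAt_id b).prodMk
      ((hasDerivAt_const b c).prodMk ((hasDerivAt_const b d).prodMk (hasDerivAt_const b e))))
  have curve3 : ∀ (a b c d e : ℝ),
      HasDerivAt (fun s => ((a, b, s, d, e) : ℝ × ℝ × ℝ × ℝ × ℝ)) e3 c :=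
    fun a b c d e => (hasDerivAt_const c a).prodMk ((hasDerivAt_const c b).prodMk
      ((hasDerivAt_id c).prodMk ((hasDerivAt_const c d).prodMk (hasDerivAt_const c e))))
  have curve4 : ∀ (a b c d e : ℝ),
      HasDerivAt (fun s => ((a, b, c, s, e) : ℝ × ℝ × ℝ × ℝ × ℝ)) e4 d :=
    fun a b c d e => (hasDerivAt_const d a).prodMk ((hasDerivAt_const d b).prodMk
      ((hasDerivAt_const d c).prodMk ((hasDerivAt_id d).prodMk (hasDerivAt_const d e))))
  -- first partials in terms of f'
  have hpx1 : ∀ a b c d e : ℝ, px1 u a b c d e = f' (a, b, c, d, e) e1 := by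
    intro a b c d e
    exact (key (fun s => (s, b, c, d, e)) e1 a (curve1 a b c d e)).deriv
  have hpx2 : ∀ a b c d e : ℝ, px2 u a b c d e = f' (a, b, c, d, e) e2 := by
    intro a b c d e
    exact (key (fun s => (a, s, c, d, e)) e2 b (curve2 a b c d e)).deriv
  have hpy1 : ∀ a b c d e : ℝ, py1 u a b c d e = f' (a, b, c, d, e) e3 := by
    intro a b c d e
    exact (key (fun s => (a, b, s, d, e)) e3 c (curve3 a b c d e)).deriv
  have hpy2 : ∀ a b c d e : ℝ, py2 u a b c d e = f' (a, b, c, d, e) e4 := by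
    intro a b c d e
    exact (key (fun s => (a, b, c, s, e)) e4 d (curve4 a b c d e)).deriv
  -- notation for the diagonal point
  set Y₁ : ℝ := x₁ + φ₁ with hY₁
  set Y₂ : ℝ := x₂ + φ₂ with hY₂
  set Q : ℝ × ℝ × ℝ × ℝ × ℝ := (x₁, x₂, Y₁, Y₂, t) with hQ
  set f'' : (ℝ × ℝ × ℝ × ℝ × ℝ) →L[ℝ] (ℝ × ℝ × ℝ × ℝ × ℝ) →L[ℝ] ℝ := fderiv ℝ f' Q with hf''
  -- symmetry of second derivatives
  have hsym : ∀ v w, f'' v w = f'' w v :=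
    second_derivative_symmetric (fun y => (hFdiff y).hasFDerivAt) (hf'diff Q).hasFDerivAt
  -- second partials appearing in the PDE, at the diagonal point
  have hmix31 : py1 (px1 u) x₁ x₂ Y₁ Y₂ t = f'' e3 e1 := by
    have h : (fun s => px1 u x₁ x₂ s Y₂ t) = fun s => f' (x₁, x₂, s, Y₂, t) e1 := by
      funext s; exact hpx1 x₁ x₂ s Y₂ t
    show deriv (fun s => px1 u x₁ x₂ s Y₂ t) Y₁ = f'' e3 e1
    rw [h]
    exact (key2 (fun s => (x₁, x₂, s, Y₂, t)) e3 e1 Y₁ (curve3 x₁ x₂ Y₁ Y₂ t)).deriv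
  have hmix42 : py2 (px2 u) x₁ x₂ Y₁ Y₂ t = f'' e4 e2 := by
    have h : (fun s => px2 u x₁ x₂ Y₁ s t) = fun s => f' (x₁, x₂, Y₁, s, t) e2 := by
      funext s; exact hpx2 x₁ x₂ Y₁ s t
    show deriv (fun s => px2 u x₁ x₂ Y₁ s t) Y₂ = f'' e4 e2
    rw [h]
    exact (key2 (fun s => (x₁, x₂, Y₁, s, t)) e4 e2 Y₂ (curve4 x₁ x₂ Y₁ Y₂ t)).deriv
  have h11 : px1 (px1 u) x₁ x₂ Y₁ Y₂ t = f'' e1 e1 := by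
    have h : (fun s => px1 u s x₂ Y₁ Y₂ t) = fun s => f' (s, x₂, Y₁, Y₂, t) e1 := by
      funext s; exact hpx1 s x₂ Y₁ Y₂ t
    show deriv (fun s => px1 u s x₂ Y₁ Y₂ t) x₁ = f'' e1 e1
    rw [h]
    exact (key2 (fun s => (s, x₂, Y₁, Y₂, t)) e1 e1 x₁ (curve1 x₁ x₂ Y₁ Y₂ t)).deriv
  have h22 : px2 (px2 u) x₁ x₂ Y₁ Y₂ t = f'' e2 e2 := by
    have h : (fun s => px2 u x₁ s Y₁ Y₂ t) = fun s => f' (x₁, s, Y₁, Y₂, t) e2 := by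
      funext s; exact hpx2 x₁ s Y₁ Y₂ t
    show deriv (fun s => px2 u x₁ s Y₁ Y₂ t) x₂ = f'' e2 e2
    rw [h]
    exact (key2 (fun s => (x₁, s, Y₁, Y₂, t)) e2 e2 x₂ (curve2 x₁ x₂ Y₁ Y₂ t)).deriv
  -- derivatives of K
  have hKcurve1 : ∀ (a b : ℝ), HasDerivAt (fun s => K (s, b)) (fderiv ℝ K (a, b) (1, 0)) a := by
    intro a b
    exact (hKdiff (a, b)).hasFDerivAt.comp_hasDerivAt a
      ((hasDerivAt_id a).prodMk (hasDerivAt_const a b))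
  have hKcurve2 : ∀ (a b : ℝ), HasDerivAt (fun s => K (a, s)) (fderiv ℝ K (a, b) (0, 1)) b := by
    intro a b
    exact (hKdiff (a, b)).hasFDerivAt.comp_hasDerivAt b
      ((hasDerivAt_const b a).prodMk (hasDerivAt_id b))
  have hKshift1 : HasDerivAt (fun s => K (s + φ₁, Y₂)) (fderiv ℝ K (Y₁, Y₂) (1, 0)) x₁ := by
    have := (hKdiff (Y₁, Y₂)).hasFDerivAt.comp_hasDerivAt x₁
      (((hasDerivAt_id x₁).add_const φ₁).prodMk (hasDerivAt_const x₁ Y₂))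
    exact this
  have hKshift2 : HasDerivAt (fun s => K (Y₁, s + φ₂)) (fderiv ℝ K (Y₁, Y₂) (0, 1)) x₂ := by
    have := (hKdiff (Y₁, Y₂)).hasFDerivAt.comp_hasDerivAt x₂
      ((hasDerivAt_const x₂ Y₁).prodMk ((hasDerivAt_id x₂).add_const φ₂))
    exact this
  -- abbreviations for K and its partials at the diagonal
  set k1 : ℝ := fderiv ℝ K (Y₁, Y₂) (1, 0) with hk1
  set k2 : ℝ := fderiv ℝ K (Y₁, Y₂) (0, 1) with hk2
  -- Terms of the PDE, evaluated at the diagonal point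
  have hT1 : deriv (fun s => K (s, Y₂) * py1 u x₁ x₂ s Y₂ t) Y₁
      = k1 * f' Q e3 + K (Y₁, Y₂) * f'' e3 e3 := by
    have h : (fun s => K (s, Y₂) * py1 u x₁ x₂ s Y₂ t)
        = fun s => K (s, Y₂) * f' (x₁, x₂, s, Y₂, t) e3 := by
      funext s; rw [hpy1]
    rw [h]
    have hP : HasDerivAt (fun s => f' (x₁, x₂, s, Y₂, t) e3) (f'' e3 e3) Y₁ :=
      key2 (fun s => (x₁, x₂, s, Y₂, t)) e3 e3 Y₁ (curve3 x₁ x₂ Y₁ Y₂ t)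
    exact ((hKcurve1 Y₁ Y₂).mul hP).deriv
  have hT2 : deriv (fun s => K (Y₁, s) * py2 u x₁ x₂ Y₁ s t) Y₂
      = k2 * f' Q e4 + K (Y₁, Y₂) * f'' e4 e4 := by
    have h : (fun s => K (Y₁, s) * py2 u x₁ x₂ Y₁ s t)
        = fun s => K (Y₁, s) * f' (x₁, x₂, Y₁, s, t) e4 := by
      funext s; rw [hpy2]
    rw [h]
    have hP : HasDerivAt (fun s => f' (x₁, x₂, Y₁, s, t) e4) (f'' e4 e4) Y₂ :=
      key2 (fun s => (x₁, x₂, Y₁, s, t)) e4 e4 Y₂ (curve4 x₁ x₂ Y₁ Y₂ t)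
    exact ((hKcurve2 Y₁ Y₂).mul hP).deriv
  have hK1d : deriv (fun s => K (s, Y₂)) Y₁ = k1 := (hKcurve1 Y₁ Y₂).deriv
  have hK2d : deriv (fun s => K (Y₁, s)) Y₂ = k2 := (hKcurve2 Y₁ Y₂).deriv
  -- Right-hand side of the goal: diagonal derivatives
  have hdiag1 : ∀ s : ℝ, deriv (fun w => u w x₂ (w + φ₁) Y₂ t) s
      = f' (s, x₂, s + φ₁, Y₂, t) (e1 + e3) := by
    intro s
    have hc : HasDerivAt (fun w => ((w, x₂, w + φ₁, Y₂, t) : ℝ × ℝ × ℝ × ℝ × ℝ)) (e1 + e3) s := by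
      have := (hasDerivAt_id s).prodMk ((hasDerivAt_const s x₂).prodMk
        (((hasDerivAt_id s).add_const φ₁).prodMk
          ((hasDerivAt_const s Y₂).prodMk (hasDerivAt_const s t))))
      convert this using 1
      all_goals norm_num [he1, he3, Prod.ext_iff]
    exact (key (fun w => (w, x₂, w + φ₁, Y₂, t)) (e1 + e3) s hc).deriv
  have hdiag2 : ∀ s : ℝ, deriv (fun w => u x₁ w (x₁ + φ₁) (w + φ₂) t) s
      = f' (x₁, s, Y₁, s + φ₂, t) (e2 + e4) := by
    intro s
    have hc : HasDerivAt (fun w => ((x₁, w, Y₁, w + φ₂, t) : ℝ × ℝ × ℝ × ℝ × ℝ)) (e2 + e4) s := by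
      have := (hasDerivAt_const s x₁).prodMk ((hasDerivAt_id s).prodMk
        ((hasDerivAt_const s Y₁).prodMk
          (((hasDerivAt_id s).add_const φ₂).prodMk (hasDerivAt_const s t))))
      convert this using 1
      all_goals norm_num [he2, he4, Prod.ext_iff]
    rw [← hY₁]
    exact (key (fun w => (x₁, w, Y₁, w + φ₂, t)) (e2 + e4) s hc).deriv
  -- RHS term 1
  have hR1 : deriv (fun s => K (s + φ₁, Y₂) * deriv (fun w => u w x₂ (w + φ₁) Y₂ t) s) x₁
      = k1 * f' Q (e1 + e3) + K (Y₁, Y₂) * f'' (e1 + e3) (e1 + e3) := by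
    have h : (fun s => K (s + φ₁, Y₂) * deriv (fun w => u w x₂ (w + φ₁) Y₂ t) s)
        = fun s => K (s + φ₁, Y₂) * f' (s, x₂, s + φ₁, Y₂, t) (e1 + e3) := by
      funext s; rw [hdiag1 s]
    rw [h]
    have hdc : HasDerivAt (fun s => ((s, x₂, s + φ₁, Y₂, t) : ℝ × ℝ × ℝ × ℝ × ℝ)) (e1 + e3) x₁ := by
      have := (hasDerivAt_id x₁).prodMk ((hasDerivAt_const x₁ x₂).prodMk
        (((hasDerivAt_id x₁).add_const φ₁).prodMk
          ((hasDerivAt_const x₁ Y₂).prodMk (hasDerivAt_const x₁ t))))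
      convert this using 1
      all_goals norm_num [he1, he3, Prod.ext_iff]
    have hP : HasDerivAt (fun s => f' (s, x₂, s + φ₁, Y₂, t) (e1 + e3))
        (f'' (e1 + e3) (e1 + e3)) x₁ := by
      have := key2 (fun s => (s, x₂, s + φ₁, Y₂, t)) (e1 + e3) (e1 + e3) x₁ hdc
      simpa [← hY₁, ← hQ] using this
    exact (hKshift1.mul hP).deriv
  -- RHS term 2
  have hR2 : deriv (fun s => K (Y₁, s + φ₂) * deriv (fun w => u x₁ w (x₁ + φ₁) (w + φ₂) t) s) x₂
      = k2 * f' Q (e2 + e4) + K (Y₁, Y₂) * f'' (e2 + e4) (e2 + e4) := by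
    have h : (fun s => K (Y₁, s + φ₂) * deriv (fun w => u x₁ w (x₁ + φ₁) (w + φ₂) t) s)
        = fun s => K (Y₁, s + φ₂) * f' (x₁, s, Y₁, s + φ₂, t) (e2 + e4) := by
      funext s; rw [hdiag2 s]
    rw [h]
    have hdc : HasDerivAt (fun s => ((x₁, s, Y₁, s + φ₂, t) : ℝ × ℝ × ℝ × ℝ × ℝ)) (e2 + e4) x₂ := by
      have := (hasDerivAt_const x₂ x₁).prodMk ((hasDerivAt_id x₂).prodMk
        ((hasDerivAt_const x₂ Y₁).prodMk
          (((hasDerivAt_id x₂).add_const φ₂).prodMk (hasDerivAt_const x₂ t))))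
      convert this using 1
      all_goals norm_num [he2, he4, Prod.ext_iff]
    have hP : HasDerivAt (fun s => f' (x₁, s, Y₁, s + φ₂, t) (e2 + e4))
        (f'' (e2 + e4) (e2 + e4)) x₂ := by
      have := key2 (fun s => (x₁, s, Y₁, s + φ₂, t)) (e2 + e4) (e2 + e4) x₂ hdc
      simpa [← hY₂, ← hQ] using this
    exact (hKshift2.mul hP).deriv
  -- Put everything together
  have hLHS : deriv (fun s => u x₁ x₂ (x₁ + φ₁) (x₂ + φ₂) s) t = pt5 u x₁ x₂ Y₁ Y₂ t := rfl
  rw [show (x₁ + φ₁ : ℝ) = Y₁ from rfl, show (x₂ + φ₂ : ℝ) = Y₂ from rfl] at *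
  rw [hLHS, hpde x₁ x₂ Y₁ Y₂ t, hT1, hT2, hK1d, hK2d, hmix31, hmix42, h11, h22,
    hpx1, hpx2, hR1, hR2]
  have hadd : ∀ v w z : ℝ × ℝ × ℝ × ℝ × ℝ, f'' (v + w) z = f'' v z + f'' w z := by
    intro v w z; rw [map_add]; rfl
  have hadd2 : ∀ v w z : ℝ × ℝ × ℝ × ℝ × ℝ, f'' z (v + w) = f'' z v + f'' z w := by
    intro v w z; exact map_add _ _ _
  have haddf : ∀ v w : ℝ × ℝ × ℝ × ℝ × ℝ, f' Q (v + w) = f' Q v + f' Q w := by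
    intro v w; exact map_add _ _ _
  rw [haddf, haddf, hadd, hadd2, hadd2, hadd, hadd2, hadd2,
    hsym e1 e3, hsym e2 e4]
  ring
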